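/- arXiv:1912.01090 — 5 statements merged into one kernel-verified Lean document; each statement's English description precedes it below -/
import Mathlib

section
/- If n ≥ m ≥ 0 are natural numbers, then the number of powers of 2 appearing in both the binary expansion of n and the binary expansion of n-m is at least σ(n) - σ(m). -/
/-- Stirling numbers of the second kind. -/
def stirling2 : ℕ → ℕ → ℕ
  | 0, 0 => 1
  | 0, _ + 1 => 0
  | _ + 1, 0 => 0
  | n + 1, k + 1 => (k + 1) * stirling2 n (k + 1) + stirling2 n k

/-- Sum of base-2 digits. -/
def sigma2 (n : ℕ) : ℕ := (Nat.digits 2 n).sum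

/-- The set of powers of 2 appearing in the binary expansion of `n`. -/
def twoPows (n : ℕ) : Finset ℕ := (Nat.bitIndices n).toFinset.image (2 ^ ·)

lemma sigma2_two_mul (a : ℕ) : sigma2 (2 * a) = sigma2 a := by
  rcases Nat.eq_zero_or_pos a with rfl | ha
  · simp [sigma2]
  · unfold sigma2
    rw [Nat.digits_def' (by norm_num) (by omega)]
    simp [Nat.mul_div_cancel_left _ (by norm_num : (0:ℕ) < 2), Nat.mul_mod_right]

lemma sigma2_two_mul_add_one (a : ℕ) : sigma2 (2 * a + 1) = sigma2 a + 1 := by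
  unfold sigma2
  rw [Nat.digits_def' (by norm_num) (by omega)]
  have h1 : (2 * a + 1) % 2 = 1 := by omega
  have h2 : (2 * a + 1) / 2 = a := by omega
  rw [h1, h2]; simp [Nat.add_comm]

lemma sigma2_succ_le (b : ℕ) : sigma2 (b + 1) ≤ sigma2 b + 1 := by
  induction b using Nat.strong_induction_on with
  | _ b ih =>
    rcases Nat.even_or_odd b with ⟨c, hc⟩ | ⟨c, hc⟩
    · subst hc
      have : c + c = 2 * c := by ring
      rw [this, sigma2_two_mul, sigma2_two_mul_add_one]
    · subst hc
      have : 2 * c + 1 + 1 = 2 * (c + 1) := by ring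
      rw [this, sigma2_two_mul, sigma2_two_mul_add_one]
      have := ih c (by omega)
      omega

/-- The set of bit indices of `n` as a `Finset`. -/
def bitSet (n : ℕ) : Finset ℕ := (Nat.bitIndices n).toFinset

lemma bitSet_two_mul (a : ℕ) : bitSet (2 * a) = (bitSet a).image (· + 1) := by
  ext x; simp [bitSet, Nat.bitIndices_two_mul, List.mem_map]

lemma bitSet_two_mul_add_one (a : ℕ) :
    bitSet (2 * a + 1) = insert 0 ((bitSet a).image (· + 1)) := by
  ext x; simp [bitSet, Nat.bitIndices_two_mul_add_one, List.mem_map]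

lemma card_bitSet (n : ℕ) : (bitSet n).card = sigma2 n := by
  induction n using Nat.strong_induction_on with
  | _ n ih =>
    rcases Nat.eq_zero_or_pos n with rfl | hn
    · simp [bitSet, sigma2]
    rcases Nat.even_or_odd n with ⟨c, hc⟩ | ⟨c, hc⟩
    · have hc' : n = 2 * c := by omega
      subst hc'
      rw [bitSet_two_mul, sigma2_two_mul,
        Finset.card_image_of_injective _ (add_left_injective 1)]
      exact ih c (by omega)
    · subst hc
      rw [bitSet_two_mul_add_one, sigma2_two_mul_add_one]
      rw [Finset.card_insert_of_notMem (by simp),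
        Finset.card_image_of_injective _ (add_left_injective 1)]
      rw [ih c (by omega)]

lemma key (n : ℕ) : ∀ m : ℕ, m ≤ n →
    sigma2 n ≤ (bitSet n ∩ bitSet (n - m)).card + sigma2 m := by
  induction n using Nat.strong_induction_on with
  | _ n ih =>
    intro m hm
    have hinj : Function.Injective (· + 1 : ℕ → ℕ) := add_left_injective 1
    rcases Nat.eq_zero_or_pos n with rfl | hn
    · interval_cases m; simp [sigma2]
    rcases Nat.even_or_odd n with ⟨a, ha⟩ | ⟨a, ha⟩
    · have ha' : n = 2 * a := by omega
      subst ha'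
      have ha0 : 0 < a := by omega
      rcases Nat.even_or_odd m with ⟨b, hb⟩ | ⟨b, hb⟩
      · have hb' : m = 2 * b := by omega
        subst hb'
        have hsub : 2 * a - 2 * b = 2 * (a - b) := by omega
        rw [hsub, sigma2_two_mul, sigma2_two_mul, bitSet_two_mul, bitSet_two_mul,
          ← Finset.image_inter _ _ hinj, Finset.card_image_of_injective _ hinj]
        exact ih a (by omega) b (by omega)
      · have hb' : m = 2 * b + 1 := by omega
        subst hb'
        have hble : b + 1 ≤ a := by omega
        have hsub : 2 * a - (2 * b + 1) = 2 * (a - (b + 1)) + 1 := by omega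
        rw [hsub, sigma2_two_mul, sigma2_two_mul_add_one, bitSet_two_mul,
          bitSet_two_mul_add_one]
        have hint : (bitSet a).image (· + 1) ∩ insert 0 ((bitSet (a - (b + 1))).image (· + 1))
            = ((bitSet a ∩ bitSet (a - (b + 1)))).image (· + 1) := by
          rw [Finset.inter_insert_of_notMem (by simp), ← Finset.image_inter _ _ hinj]
        rw [hint, Finset.card_image_of_injective _ hinj]
        have h1 := ih a (by omega) (b + 1) hble
        have h2 := sigma2_succ_le b
        omega
    · subst ha
      rcases Nat.even_or_odd m with ⟨b, hb⟩ | ⟨b, hb⟩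
      · have hb' : m = 2 * b := by omega
        subst hb'
        have hsub : 2 * a + 1 - 2 * b = 2 * (a - b) + 1 := by omega
        rw [hsub, sigma2_two_mul_add_one, sigma2_two_mul, bitSet_two_mul_add_one,
          bitSet_two_mul_add_one]
        have hint : insert 0 ((bitSet a).image (· + 1)) ∩
            insert 0 ((bitSet (a - b)).image (· + 1))
            = insert 0 (((bitSet a ∩ bitSet (a - b))).image (· + 1)) := by
          rw [Finset.insert_inter_of_mem (by simp), Finset.inter_insert_of_notMem (by simp),
            ← Finset.image_inter _ _ hinj]
        rw [hint, Finset.card_insert_of_notMem (by simp),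
          Finset.card_image_of_injective _ hinj]
        have h1 := ih a (by omega) b (by omega)
        omega
      · have hb' : m = 2 * b + 1 := by omega
        subst hb'
        have hsub : 2 * a + 1 - (2 * b + 1) = 2 * (a - b) := by omega
        rw [hsub, sigma2_two_mul_add_one, sigma2_two_mul_add_one, bitSet_two_mul_add_one,
          bitSet_two_mul]
        have hint : insert 0 ((bitSet a).image (· + 1)) ∩ ((bitSet (a - b)).image (· + 1))
            = ((bitSet a ∩ bitSet (a - b))).image (· + 1) := by
          rw [Finset.insert_inter_of_notMem (by simp), ← Finset.image_inter _ _ hinj]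
        rw [hint, Finset.card_image_of_injective _ hinj]
        have h1 := ih a (by omega) b (by omega)
        omega

theorem stmt_2 (n m : ℕ) (h : m ≤ n) :
    ((twoPows n ∩ twoPows (n - m)).card : ℤ) ≥ (sigma2 n : ℤ) - sigma2 m := by
  have hpinj : Function.Injective ((2 : ℕ) ^ ·) :=
    fun x y hxy => Nat.pow_right_injective (le_refl 2) hxy
  have hcard : (twoPows n ∩ twoPows (n - m)).card = (bitSet n ∩ bitSet (n - m)).card := by
    unfold twoPows
    rw [← Finset.image_inter _ _ hpinj, Finset.card_image_of_injective _ hpinj]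
    rfl
  have hk := key n m h
  rw [hcard]
  omega
end

section
/- If the binomial coefficient C(b, a) is odd (with b ≥ a ≥ 0), then #([b] ∩ [b-a]) = #[b-a] = σ(b) - σ(a). -/
lemma mem_bitIndices_iff {n : ℕ} : ∀ i, (i ∈ n.bitIndices ↔ n.testBit i) := by
  induction n using Nat.binaryRec with
  | zero => simp
  | bit b n ih =>
    intro i
    cases b
    · rw [Nat.bitIndices_bit_false]
      cases i with
      | zero => simp [Nat.bit_false, Nat.testBit_zero, Nat.mul_mod_right]
      | succ i =>
        simp [Nat.bit_false, Nat.testBit_succ, Nat.mul_div_cancel_left, ih i]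
    · rw [Nat.bitIndices_bit_true]
      cases i with
      | zero => simp [Nat.bit_true, Nat.testBit_zero, Nat.mul_add_mod]
      | succ i =>
        simp [Nat.bit_true, Nat.testBit_succ, Nat.mul_add_div, ih i]

lemma sigma2_eq_length (n : ℕ) : (Nat.digits 2 n).sum = n.bitIndices.length := by
  induction n using Nat.binaryRec with
  | zero => simp
  | bit b n ih =>
    rcases eq_or_ne (Nat.bit b n) 0 with h0 | h0
    · rw [h0]; obtain ⟨rfl, rfl⟩ := Nat.bit_eq_zero_iff.mp h0; simp
    · rw [Nat.digits_def' (by norm_num) (Nat.pos_of_ne_zero h0)]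
      cases b
      · simp [Nat.bit_false, Nat.mul_div_cancel_left, Nat.mul_mod_right, ih,
          Nat.bitIndices_two_mul]
      · have h1 : (2 * n + 1) / 2 = n := by omega
        have h2 : (2 * n + 1) % 2 = 1 := by omega
        have h3 : Nat.bit true n = 2 * n + 1 := by rw [Nat.bit_true]
        rw [h3, h1, h2, Nat.bitIndices_two_mul_add_one]
        simp [ih, add_comm]

lemma odd_choose_step {b a : ℕ} (h : Odd (Nat.choose b a)) :
    Odd (Nat.choose (b % 2) (a % 2)) ∧ Odd (Nat.choose (b / 2) (a / 2)) := by
  have : Fact (Nat.Prime 2) := ⟨Nat.prime_two⟩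
  have hm := (Choose.choose_modEq_choose_mod_mul_choose_div_nat (p := 2) (n := b) (k := a))
  have : Odd (Nat.choose (b % 2) (a % 2) * Nat.choose (b / 2) (a / 2)) := by
    rcases Nat.even_or_odd (Nat.choose (b % 2) (a % 2) * Nat.choose (b / 2) (a / 2)) with he | ho
    · exfalso
      rw [Nat.ModEq] at hm
      rw [Nat.odd_iff] at h
      rw [Nat.even_iff] at he
      omega
    · exact ho
  exact Nat.odd_mul.mp this

lemma testBit_subset_of_odd_choose : ∀ i b a : ℕ, Odd (Nat.choose b a) →
    a.testBit i → b.testBit i := by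
  intro i
  induction i with
  | zero =>
    intro b a h ha
    obtain ⟨h0, _⟩ := odd_choose_step h
    rw [Nat.testBit_zero] at ha ⊢
    simp only [decide_eq_true_eq] at ha ⊢
    by_contra hb
    have hb0 : b % 2 = 0 := by omega
    rw [hb0, ha] at h0
    simp [Nat.choose] at h0
  | succ i ih =>
    intro b a h ha
    obtain ⟨_, h1⟩ := odd_choose_step h
    rw [Nat.testBit_succ] at ha ⊢
    exact ih _ _ h1 ha

lemma sigma2_eq_card (n : ℕ) : sigma2 n = (Nat.bitIndices n).toFinset.card := by
  rw [sigma2, sigma2_eq_length, List.toFinset_card_of_nodup Nat.bitIndices_sorted.nodup]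

theorem stmt_3 (a b : ℕ) (hab : a ≤ b) (h : Odd (Nat.choose b a)) :
    (twoPows b ∩ twoPows (b - a)).card = (twoPows (b - a)).card ∧
      ((twoPows b ∩ twoPows (b - a)).card : ℤ) = (sigma2 b : ℤ) - sigma2 a := by
  set Sa := (Nat.bitIndices a).toFinset with hSa
  set Sb := (Nat.bitIndices b).toFinset with hSb
  have hsub : Sa ⊆ Sb := by
    intro i hi
    rw [hSa, List.mem_toFinset, mem_bitIndices_iff] at hi
    rw [hSb, List.mem_toFinset, mem_bitIndices_iff]
    exact testBit_subset_of_odd_choose i b a h hi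
  have hsum : a + ∑ i ∈ Sb \ Sa, 2 ^ i = b := by
    have h1 : ∑ i ∈ Sa, 2 ^ i = a := Finset.twoPowSum_toFinset_bitIndices a
    have h2 : ∑ i ∈ Sb, 2 ^ i = b := Finset.twoPowSum_toFinset_bitIndices b
    rw [← h1, ← h2, ← Finset.sum_union Finset.disjoint_sdiff,
      Finset.union_sdiff_of_subset hsub]
  have hba : b - a = ∑ i ∈ Sb \ Sa, 2 ^ i := by omega
  have hS : (Nat.bitIndices (b - a)).toFinset = Sb \ Sa := by
    rw [hba, Finset.toFinset_bitIndices_twoPowSum]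
  have hinj : Function.Injective (2 ^ · : ℕ → ℕ) := Nat.pow_right_injective le_rfl
  have hsub2 : twoPows (b - a) ⊆ twoPows b := by
    rw [twoPows, twoPows, hS]
    exact Finset.image_subset_image (Finset.sdiff_subset.trans subset_rfl)
  have hinter : twoPows b ∩ twoPows (b - a) = twoPows (b - a) :=
    Finset.inter_eq_right.mpr hsub2
  refine ⟨by rw [hinter], ?_⟩
  rw [hinter, twoPows, hS, Finset.card_image_of_injective _ hinj,
    Finset.card_sdiff_of_subset hsub, sigma2_eq_card, sigma2_eq_card]
  have := Finset.card_le_card hsub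
  push_cast [Nat.cast_sub this]
  ring
end

section
/- Let b, c, m, h be positive integers with b·2^{h+1} + 2^h < 2^m and c odd, and set a = 2^{h+1} - 1. Then ν(S(c·2^m + b·2^{h+1} + 2^h, b·2^{h+2} + a)) = σ(a) - 1 = h. -/
open PowerSeries Finset

section GF
variable (R : Type*) [CommRing R]

/-- generating function of column k of Stirling numbers -/
noncomputable def stirGF (k : ℕ) : R⟦X⟧ := PowerSeries.mk fun n => (stirling2 n k : R)

noncomputable def lf (v : ℕ) : R⟦X⟧ := 1 - PowerSeries.C (v : R) * X

lemma stirling2_zero_succ (k : ℕ) : stirling2 0 (k+1) = 0 := rfl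
lemma stirling2_succ_zero (n : ℕ) : stirling2 (n+1) 0 = 0 := rfl
lemma stirling2_succ (n k : ℕ) :
    stirling2 (n+1) (k+1) = (k + 1) * stirling2 n (k+1) + stirling2 n k := rfl

lemma stirGF_zero : stirGF R 0 = 1 := by
  ext n
  rw [stirGF, coeff_mk, PowerSeries.coeff_one]
  cases n with
  | zero => simp [stirling2]
  | succ n => simp [stirling2_succ_zero]

lemma stirGF_step (k : ℕ) : lf R (k+1) * stirGF R (k+1) = X * stirGF R k := by
  ext n
  rw [lf, sub_mul, one_mul, map_sub]
  cases n with
  | zero =>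
    simp only [PowerSeries.coeff_zero_eq_constantCoeff, map_mul]
    simp [stirGF, stirling2_zero_succ, PowerSeries.constantCoeff_X]
  | succ n =>
    simp only [mul_assoc, PowerSeries.coeff_C_mul, PowerSeries.coeff_succ_X_mul, stirGF,
      coeff_mk, stirling2_succ]
    push_cast
    ring

lemma stirGF_eq (k : ℕ) : (∏ j ∈ range k, lf R (j+1)) * stirGF R k = X ^ k := by
  induction k with
  | zero => simp [stirGF_zero]
  | succ k ih =>
    rw [prod_range_succ, mul_assoc, stirGF_step, pow_succ, ← ih]
    ring

end GF



section Pairing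
variable {R : Type*} [CommRing R] (h : ℕ) (hM : ((2^(h+1) : ℕ) : R) = 0)
include hM

lemma lf_periodic (q v : ℕ) : lf R (q * 2^(h+1) + v) = lf R v := by
  unfold lf
  rw [Nat.cast_add, Nat.cast_mul, hM, mul_zero, zero_add]

lemma prod_block (u : ℕ) :
    ∏ j ∈ range (u * 2^(h+1)), lf R j = (∏ v ∈ range (2^(h+1)), lf R v) ^ u := by
  induction u with
  | zero => simp
  | succ u ih =>
    rw [add_mul, one_mul, Finset.prod_range_add, ih, pow_succ]
    congr 1
    exact Finset.prod_congr rfl fun v _ => lf_periodic h hM u v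

lemma lf_pair (w : ℕ) (hw : w ≤ 2^(h+1)) :
    lf R w * lf R (2^(h+1) - w) = 1 - PowerSeries.C ((w^2 : ℕ) : R) * X^2 := by
  unfold lf
  have hc : ((2^(h+1) - w : ℕ) : R) = -((w : ℕ) : R) := by
    rw [Nat.cast_sub hw, hM, zero_sub]
  rw [hc, map_neg]
  push_cast
  rw [map_pow]
  ring

lemma prod_M_eq :
    ∏ v ∈ range (2^(h+1)), lf R v
      = lf R (2^h) * ∏ v ∈ range (2^h - 1),
          (1 - PowerSeries.C (((v+1)^2 : ℕ) : R) * X^2) := by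
  have h2 : 0 < 2^h := Nat.pow_pos (by norm_num)
  have hMM : (2:ℕ)^(h+1) = 2^h + 2^h := by ring
  have h1 : (2:ℕ)^h = (2^h - 1) + 1 := by omega
  rw [show range (2^(h+1)) = range (2^h + 2^h) by rw [hMM]]
  rw [Finset.prod_range_add]
  rw [show (∏ x ∈ range (2^h), lf R x) = ∏ x ∈ range ((2^h - 1) + 1), lf R x by rw [← h1]]
  rw [show (∏ x ∈ range (2^h), lf R (2^h + x))
      = ∏ x ∈ range ((2^h - 1) + 1), lf R (2^h + x) by rw [← h1]]
  rw [Finset.prod_range_succ' (fun v => lf R v),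
      Finset.prod_range_succ' (fun v => lf R (2^h + v))]
  have hrefl : ∏ v ∈ range (2^h - 1), lf R (2^h + (v + 1))
      = ∏ v ∈ range (2^h - 1), lf R (2^(h+1) - (v+1)) := by
    rw [← Finset.prod_range_reflect (fun v => lf R (2^h + (v + 1))) (2^h - 1)]
    apply Finset.prod_congr rfl
    intro v hv
    rw [Finset.mem_range] at hv
    have hX : 2 ^ h + (2 ^ h - 1 - 1 - v + 1) = 2 ^ (h + 1) - (v + 1) := by omega
    rw [hX]
  rw [hrefl]
  have hlf0 : lf R 0 = 1 := by unfold lf; simp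
  rw [add_zero, hlf0, mul_one]
  rw [show (∏ k ∈ range (2^h - 1), lf R (k+1)) *
        ((∏ v ∈ range (2^h - 1), lf R (2^(h+1) - (v+1))) * lf R (2^h))
      = lf R (2^h) * ∏ x ∈ range (2^h - 1), lf R (x+1) * lf R (2^(h+1) - (x+1)) by
    rw [Finset.prod_mul_distrib]; ring]
  congr 1
  apply Finset.prod_congr rfl
  intro v hv
  rw [Finset.mem_range] at hv
  apply lf_pair h hM
  omega

end Pairing


section Even
variable {R : Type*} [CommRing R]

/-- a power series supported on even exponents -/
def EvS (f : R⟦X⟧) : Prop := ∀ n : ℕ, ¬ 2 ∣ n → PowerSeries.coeff n f = 0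

lemma EvS_one : EvS (1 : R⟦X⟧) := by
  intro n hn
  rw [PowerSeries.coeff_one, if_neg]
  rintro rfl; exact hn ⟨0, rfl⟩

lemma EvS_factor (a : R) : EvS (1 - PowerSeries.C a * X^2) := by
  intro n hn
  rw [map_sub, PowerSeries.coeff_one, PowerSeries.coeff_C_mul, PowerSeries.coeff_X_pow,
    if_neg, if_neg, mul_zero, sub_zero]
  · rintro rfl; exact hn ⟨1, rfl⟩
  · rintro rfl; exact hn ⟨0, rfl⟩

lemma EvS_mul {f g : R⟦X⟧} (hf : EvS f) (hg : EvS g) : EvS (f * g) := by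
  intro n hn
  rw [PowerSeries.coeff_mul]
  apply Finset.sum_eq_zero
  rintro ⟨i, j⟩ hij
  rw [Finset.HasAntidiagonal.mem_antidiagonal] at hij
  rcases Nat.even_or_odd i with hi | hi
  · have hi2 : i % 2 = 0 := Nat.even_iff.mp hi
    have : ¬ 2 ∣ j := by omega
    rw [hg j this, mul_zero]
  · have hi2 : i % 2 = 1 := Nat.odd_iff.mp hi
    have : ¬ 2 ∣ i := by omega
    rw [hf i this, zero_mul]

lemma EvS_prod {ι : Type*} (s : Finset ι) (f : ι → R⟦X⟧) (hf : ∀ i ∈ s, EvS (f i)) :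
    EvS (∏ i ∈ s, f i) := by
  classical
  induction s using Finset.induction_on with
  | empty => simpa using EvS_one
  | insert _ _ hnotmem ih =>
    rw [Finset.prod_insert hnotmem]
    exact EvS_mul (hf _ (Finset.mem_insert_self _ _))
      (ih fun i hi => hf i (Finset.mem_insert_of_mem hi))

lemma EvS_pow {f : R⟦X⟧} (hf : EvS f) (n : ℕ) : EvS (f ^ n) := by
  induction n with
  | zero => simpa using EvS_one
  | succ n ih => rw [pow_succ]; exact EvS_mul ih hf

lemma EvS_of_inv {f g : R⟦X⟧} (hf : EvS f) (hfg : f * g = 1) : EvS g := by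
  have hconst : PowerSeries.constantCoeff f * PowerSeries.constantCoeff g = 1 := by
    simpa using congrArg (PowerSeries.constantCoeff) hfg
  intro n
  induction n using Nat.strong_induction_on with
  | _ n ih =>
    intro hn
    have hn0 : n ≠ 0 := by rintro rfl; exact hn ⟨0, rfl⟩
    have h1 : PowerSeries.coeff n (f * g) = 0 := by
      rw [hfg, PowerSeries.coeff_one, if_neg hn0]
    rw [PowerSeries.coeff_mul] at h1
    rw [Finset.sum_eq_single ((0 : ℕ), n)] at h1
    · have h2 : PowerSeries.constantCoeff g * (PowerSeries.coeff 0 f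
          * PowerSeries.coeff n g) = 0 := by rw [h1, mul_zero]
      rw [PowerSeries.coeff_zero_eq_constantCoeff, ← mul_assoc,
        mul_comm (PowerSeries.constantCoeff g) (PowerSeries.constantCoeff f),
        hconst, one_mul] at h2
      exact h2
    · rintro ⟨i, j⟩ hij hne
      rw [Finset.HasAntidiagonal.mem_antidiagonal] at hij
      rcases Nat.even_or_odd i with hi | hi
      · have hi2 : i % 2 = 0 := Nat.even_iff.mp hi
        have hi0 : i ≠ 0 := by
          rintro rfl
          simp only [zero_add] at hij
          exact hne (by simp [hij])
        have hj : j < n := by omega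
        have hjo : ¬ 2 ∣ j := by omega
        rw [ih j hj hjo, mul_zero]
      · have hi2 : i % 2 = 1 := Nat.odd_iff.mp hi
        have : ¬ 2 ∣ i := by omega
        rw [hf i this, zero_mul]
    · intro hmem
      exact absurd (Finset.HasAntidiagonal.mem_antidiagonal.mpr (by simp)) hmem

end Even


noncomputable def Gam (s' : ℕ) : (ZMod 2)⟦X⟧ :=
  PowerSeries.mk fun n => if 2 ∣ n then ((s' + n/2).choose (n/2) : ZMod 2) else 0

lemma gam_base : (1 - X^2) * Gam 0 = 1 := by
  ext n
  rw [sub_mul, one_mul, map_sub, PowerSeries.coeff_X_pow_mul']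
  simp only [Gam, coeff_mk, PowerSeries.coeff_one, zero_add]
  match n with
  | 0 => norm_num
  | 1 => norm_num [show ¬ (2:ℕ) ∣ 1 by omega]
  | (nn+2) =>
    rw [if_pos (by omega : 2 ≤ nn + 2)]
    simp only [Nat.add_sub_cancel, Nat.choose_self]
    by_cases hd : 2 ∣ nn
    · rw [if_pos (by omega), if_pos hd]
      simp
    · rw [if_neg (by omega), if_neg hd]
      simp

lemma gam_step (s' : ℕ) : (1 - X^2) * Gam (s'+1) = Gam s' := by
  ext n
  rw [sub_mul, one_mul, map_sub, PowerSeries.coeff_X_pow_mul']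
  simp only [Gam, coeff_mk]
  match n with
  | 0 => norm_num
  | 1 => norm_num [show ¬ (2:ℕ) ∣ 1 by omega]
  | (nn+2) =>
    rw [if_pos (by omega : 2 ≤ nn + 2)]
    simp only [Nat.add_sub_cancel]
    by_cases hd : 2 ∣ nn
    · obtain ⟨t, rfl⟩ := hd
      have d1 : (2:ℕ) ∣ 2*t+2 := by omega
      have d2 : (2:ℕ) ∣ 2*t := by omega
      simp only [d1, d2, if_true]
      have e1 : (2*t+2)/2 = t+1 := by omega
      have e2 : (2*t)/2 = t := by omega
      rw [e1, e2]
      have c1 : s' + 1 + (t+1) = s' + t + 1 + 1 := by ring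
      have c2 : s' + 1 + t = s' + t + 1 := by ring
      have c3 : s' + (t+1) = s' + t + 1 := by ring
      rw [c1, c2, c3, Nat.choose_succ_succ (s' + t + 1) t]
      push_cast
      ring
    · rw [if_neg (by omega), if_neg hd, if_neg (by omega)]
      simp

lemma gam_inv (s' : ℕ) : (1 - X^2)^(s'+1) * Gam s' = 1 := by
  induction s' with
  | zero => rw [pow_one]; exact gam_base
  | succ s' ih => rw [pow_succ, mul_assoc, gam_step]; exact ih

lemma podd (w : ℕ) :
    ∏ v ∈ range (2*w+1), (1 - PowerSeries.C (((v+1)^2 : ℕ) : ZMod 2) * X^2)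
      = (1 - X^2)^(w+1) := by
  induction w with
  | zero =>
    rw [Finset.prod_range_one]
    norm_num
  | succ w ih =>
    have e : 2*(w+1)+1 = (2*w+1) + 1 + 1 := by ring
    rw [e, Finset.prod_range_succ, Finset.prod_range_succ, ih]
    have c1 : (((2*w+1+1)^2 : ℕ) : ZMod 2) = 0 := by
      rw [ZMod.natCast_eq_zero_iff]
      exact ⟨(w+1)*(2*w+2), by ring⟩
    have c2 : (((2*w+1+1+1)^2 : ℕ) : ZMod 2) = 1 := by
      have hm : ((2*w+1+1+1)^2) % 2 = 1 := by
        rw [Nat.pow_mod, show (2*w+1+1+1) % 2 = 1 by omega]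
      rw [← ZMod.natCast_mod, hm]
      rfl
    rw [c1, c2, map_zero, zero_mul, sub_zero, mul_one, map_one, one_mul]
    ring

lemma lucas_ones (n : ℕ) : ∀ a j, j < 2^n → Nat.choose (a * 2^n + (2^n - 1)) j % 2 = 1 := by
  haveI : Fact (Nat.Prime 2) := ⟨Nat.prime_two⟩
  induction n with
  | zero =>
    intro a j hj
    have : j = 0 := by omega
    subst this
    simp
  | succ n ih =>
    intro a j hj
    have e2 : (2:ℕ)^(n+1) = 2 * 2^n := by rw [pow_succ]; ring
    have hp : (0:ℕ) < 2^n := Nat.pow_pos (by norm_num)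
    have eA : a * 2^(n+1) = 2 * (a * 2^n) := by rw [e2]; ring
    set A := a * 2^n with hA
    set N := a * 2^(n+1) + (2^(n+1) - 1) with hN
    have hmod : N % 2 = 1 := by omega
    have hdiv : N / 2 = A + (2^n - 1) := by omega
    have H := Choose.choose_modEq_choose_mod_mul_choose_div_nat (n := N) (k := j) (p := 2)
    rw [Nat.ModEq] at H
    rw [hmod, hdiv] at H
    have h1 : Nat.choose 1 (j % 2) = 1 := by
      rcases Nat.mod_two_eq_zero_or_one j with hh | hh <;> rw [hh] <;> rfl
    rw [h1, one_mul] at H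
    rw [H]
    have hj2 : j / 2 < 2^n := by omega
    have hi := ih a (j/2) hj2
    rw [← hA] at hi
    exact hi

lemma digits_pow_sub_one (n : ℕ) : (Nat.digits 2 (2^n - 1)).sum = n := by
  induction n with
  | zero => simp
  | succ n ih =>
    have hp : (0:ℕ) < 2^n := Nat.pow_pos (by norm_num)
    have e2 : (2:ℕ)^(n+1) = 2 * 2^n := by rw [pow_succ]; ring
    rw [Nat.digits_def' (by norm_num : 1 < 2) (by omega : 0 < 2^(n+1) - 1)]
    have h1 : (2^(n+1) - 1) % 2 = 1 := by omega
    have h2 : (2^(n+1) - 1) / 2 = 2^n - 1 := by omega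
    rw [h1, h2, List.sum_cons, ih]
    omega


theorem key_s13 (h b t : ℕ) (hh : 0 < h) (k s : ℕ)
    (hk : k + 1 = (2*b+1) * 2^(h+1)) (hs : s = 2^(h-1) * (2*b+1)) :
    ∃ γ : ZMod (2^(h+1)),
      ((stirling2 (k + (2*t+1)) k : ℕ) : ZMod (2^(h+1))) = ((2^h : ℕ) : ZMod (2^(h+1))) * γ ∧
      ZMod.castHom (dvd_pow_self 2 (Nat.succ_ne_zero h)) (ZMod 2) γ
        = (((s - 1 + t).choose t : ℕ) : ZMod 2) := by
  set R := ZMod (2^(h+1)) with hR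
  have hM : ((2^(h+1) : ℕ) : R) = 0 := by exact_mod_cast ZMod.natCast_self _
  set a : R := ((2^h : ℕ) : R) with ha
  have ha2 : a * a = 0 := by
    rw [ha, ← Nat.cast_mul, ← pow_add, ZMod.natCast_eq_zero_iff]
    exact pow_dvd_pow 2 (by omega)
  have h2a : a + a = 0 := by
    rw [ha, ← Nat.cast_add, ← two_mul, ← pow_succ', ZMod.natCast_eq_zero_iff]
  set B : R⟦X⟧ := ∏ v ∈ range (2^h - 1), (1 - PowerSeries.C (((v+1)^2 : ℕ) : R) * X^2)
    with hB
  set Cs : R⟦X⟧ := B^(2*b+1) with hCs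
  -- square identities
  have hCaCa : PowerSeries.C a * PowerSeries.C a = 0 := by rw [← map_mul, ha2, map_zero]
  have hCaCa' : PowerSeries.C a + PowerSeries.C a = 0 := by rw [← map_add, h2a, map_zero]
  have hsq : lf R (2^h) * lf R (2^h) = 1 := by
    unfold lf
    rw [← ha]
    linear_combination (X^2 : R⟦X⟧) * hCaCa - X * hCaCa'
  have hopp : lf R (2^h) * (1 + PowerSeries.C a * X) = 1 := by
    unfold lf
    rw [← ha]
    linear_combination (-(X^2  : R⟦X⟧)) * hCaCa
  -- the product identity
  have hWk : (∏ j ∈ range k, lf R (j+1)) = lf R (2^h) * Cs := by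
    have e0 : (∏ j ∈ range k, lf R (j+1)) = ∏ j ∈ range (k+1), lf R j := by
      rw [Finset.prod_range_succ' (lf R) k]
      have : lf R 0 = 1 := by unfold lf; simp
      rw [this, mul_one]
    rw [e0, hk, prod_block h hM, prod_M_eq h hM, mul_pow]
    have hodd : lf R (2^h) ^ (2*b+1) = lf R (2^h) := by
      rw [pow_succ, pow_mul, sq, hsq, one_pow, one_mul]
    rw [hodd, hCs]
  have hCs0 : PowerSeries.constantCoeff Cs = 1 := by
    rw [hCs, map_pow, hB, map_prod]
    have : ∀ v ∈ range (2^h - 1),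
        PowerSeries.constantCoeff (1 - PowerSeries.C (((v+1)^2 : ℕ) : R) * X^2) = 1 := by
      intro v _
      simp [map_sub, map_mul, map_pow, PowerSeries.constantCoeff_X]
    rw [Finset.prod_congr rfl this]
    simp
  set D : R⟦X⟧ := Cs.invOfUnit 1 with hD
  have hCD : Cs * D = 1 := PowerSeries.mul_invOfUnit Cs 1 (by rw [hCs0]; rfl)
  have hGF : stirGF R k = X^k * ((1 + PowerSeries.C a * X) * D) := by
    have h0 := stirGF_eq R k
    rw [hWk] at h0
    have hu : ((1 + PowerSeries.C a * X) * D) * (lf R (2^h) * Cs) = 1 := by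
      calc ((1 + PowerSeries.C a * X) * D) * (lf R (2^h) * Cs)
          = (lf R (2^h) * (1 + PowerSeries.C a * X)) * (Cs * D) := by ring
        _ = 1 := by rw [hopp, hCD, one_mul]
    calc stirGF R k = (((1 + PowerSeries.C a * X) * D) * (lf R (2^h) * Cs)) * stirGF R k := by
          rw [hu, one_mul]
      _ = ((1 + PowerSeries.C a * X) * D) * ((lf R (2^h) * Cs) * stirGF R k) := by ring
      _ = X^k * ((1 + PowerSeries.C a * X) * D) := by rw [h0]; ring
  have hEvB : EvS B := by
    rw [hB]
    exact EvS_prod _ _ fun v _ => EvS_factor _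
  have hEvD : EvS D := EvS_of_inv (EvS_pow hEvB _) hCD
  refine ⟨PowerSeries.coeff (2*t) D, ?_, ?_⟩
  · -- coefficient extraction
    have := congrArg (PowerSeries.coeff (k + (2*t+1))) hGF
    rw [stirGF, coeff_mk] at this
    rw [this]
    rw [show k + (2*t+1) = (2*t+1) + k from by ring, PowerSeries.coeff_X_pow_mul]
    rw [add_mul, one_mul, map_add, mul_assoc, PowerSeries.coeff_C_mul,
      PowerSeries.coeff_succ_X_mul, hEvD (2*t+1) (by omega), zero_add, ha]
  · -- mod 2 computation
    have hdvd : (2:ℕ) ∣ 2^(h+1) := dvd_pow_self 2 (Nat.succ_ne_zero h)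
    set φn := ZMod.castHom hdvd (ZMod 2) with hφn
    set φ := PowerSeries.map φn with hφ
    have hφC : φ Cs = (1 - X^2)^(s - 1 + 1) := by
      have hs1 : 1 ≤ s := by
        rw [hs]
        exact Nat.one_le_iff_ne_zero.mpr (by positivity)
      have hφB : φ B = (1 - X^2)^(2^(h-1)) := by
        rw [hB, hφ, map_prod]
        have e1 : ∀ v ∈ range (2^h - 1),
            (PowerSeries.map φn) (1 - PowerSeries.C (((v+1)^2 : ℕ) : R) * X^2)
              = (1 - PowerSeries.C (((v+1)^2 : ℕ) : ZMod 2) * X^2) := by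
          intro v _
          rw [map_sub, map_one, map_mul, map_pow, PowerSeries.map_C, PowerSeries.map_X,
            map_natCast]
        rw [Finset.prod_congr rfl e1]
        have e2 : 2^h - 1 = 2*(2^(h-1) - 1) + 1 := by
          have : (2:ℕ)^h = 2 * 2^(h-1) := by
            conv_lhs => rw [show h = (h-1)+1 by omega]
            rw [pow_succ]
            ring
          have h2 : (0:ℕ) < 2^(h-1) := Nat.pow_pos (by norm_num)
          omega
        rw [e2, podd]
        congr 1
        have h2 : (0:ℕ) < 2^(h-1) := Nat.pow_pos (by norm_num)
        omega
      rw [hCs, map_pow, hφB, ← pow_mul, show s - 1 + 1 = s by omega, hs]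
    have hφD : φ D = Gam (s - 1) := by
      have h1 : φ Cs * φ D = 1 := by rw [← map_mul, hCD, map_one]
      calc φ D = φ D * ((1 - X^2)^(s - 1 + 1) * Gam (s-1)) := by rw [gam_inv, mul_one]
        _ = (φ Cs * φ D) * Gam (s-1) := by rw [hφC]; ring
        _ = Gam (s-1) := by rw [h1, one_mul]
    have := congrArg (PowerSeries.coeff (2*t)) hφD
    rw [hφ, PowerSeries.coeff_map] at this
    rw [hφn] at this
    rw [this, Gam, coeff_mk, if_pos ⟨t, rfl⟩, show 2*t/2 = t by omega]

theorem stmt_13 (b c m h : ℕ) (hb : 0 < b) (hc : 0 < c) (hm : 0 < m) (hh : 0 < h)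
    (hbm : b * 2 ^ (h + 1) + 2 ^ h < 2 ^ m) (hcodd : Odd c) :
    (padicValNat 2 (stirling2 (c * 2 ^ m + b * 2 ^ (h + 1) + 2 ^ h)
        (b * 2 ^ (h + 2) + (2 ^ (h + 1) - 1))) : ℤ) = (sigma2 (2 ^ (h + 1) - 1) : ℤ) - 1 ∧
      (sigma2 (2 ^ (h + 1) - 1) : ℤ) - 1 = h := by
  haveI : Fact (Nat.Prime 2) := ⟨Nat.prime_two⟩
  have hsig : sigma2 (2^(h+1) - 1) = h + 1 := digits_pow_sub_one (h+1)
  have hmain : padicValNat 2 (stirling2 (c * 2 ^ m + b * 2 ^ (h + 1) + 2 ^ h)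
      (b * 2 ^ (h + 2) + (2 ^ (h + 1) - 1))) = h := by
    obtain ⟨c', rfl⟩ : ∃ c', c = c' + 1 := ⟨c - 1, by omega⟩
    set K := b * 2 ^ (h + 2) + (2 ^ (h + 1) - 1) with hK
    set N := (c'+1) * 2 ^ m + b * 2 ^ (h + 1) + 2 ^ h with hN
    set s := 2^(h-1) * (2*b+1) with hsdef
    set t := (c'+1) * 2^(m-1) - s with htdef
    -- power facts
    have e1 : (2:ℕ)^(h+1) = 2 * 2^h := by rw [pow_succ]; ring
    have e3 : (2:ℕ)^h = 2 * 2^(h-1) := by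
      conv_lhs => rw [show h = (h-1)+1 by omega]
      rw [pow_succ]; ring
    have e4 : (2:ℕ)^m = 2 * 2^(m-1) := by
      conv_lhs => rw [show m = (m-1)+1 by omega]
      rw [pow_succ]; ring
    have hp1 : (0:ℕ) < 2^h := Nat.pow_pos (by norm_num)
    have hp2 : (0:ℕ) < 2^(m-1) := Nat.pow_pos (by norm_num)
    have hp3 : (0:ℕ) < 2^(h-1) := Nat.pow_pos (by norm_num)
    have hk : K + 1 = (2*b+1) * 2^(h+1) := by
      have h0 : K + 1 = b * 2^(h+2) + 2^(h+1) := by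
        have : (0:ℕ) < 2^(h+1) := Nat.pow_pos (by norm_num)
        omega
      rw [h0, pow_succ]
      ring
    have h2s : 2*s = b * 2^(h+1) + 2^h := by
      rw [hsdef, e1]
      conv_rhs => rw [e3]
      ring
    have h4s : (2*b+1) * 2^(h+1) = 4*s := by
      rw [hsdef, e1]
      conv_lhs => rw [e3]
      ring
    have hsm : s < 2^(m-1) := by omega
    have hcge : 2^(m-1) ≤ (c'+1) * 2^(m-1) := Nat.le_mul_of_pos_left _ (by omega)
    have hts : s ≤ (c'+1) * 2^(m-1) := by omega
    have ht2 : (c'+1)*2^m = 2*((c'+1)*2^(m-1)) := by rw [e4]; ring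
    have hNK : N = K + (2*t + 1) := by omega
    obtain ⟨γ, hst, hγ⟩ := key_s13 h b t hh K s hk hsdef
    rw [← hNK] at hst
    -- Lucas part
    have hA : s - 1 + t = (c'+1) * 2^(m-1) - 1 := by omega
    have hchoose : ((s - 1 + t).choose t) % 2 = 1 := by
      rw [hA]
      have hsym : ((c'+1) * 2^(m-1) - 1).choose (((c'+1) * 2^(m-1) - 1) - t)
          = ((c'+1) * 2^(m-1) - 1).choose t :=
        Nat.choose_symm (by omega)
      rw [← hsym, show ((c'+1) * 2^(m-1) - 1) - t = s - 1 by omega]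
      have hlucas := lucas_ones (m-1) c' (s-1) (by omega)
      rw [show c' * 2^(m-1) + (2^(m-1) - 1) = (c'+1) * 2^(m-1) - 1 by
        have : (c'+1) * 2^(m-1) = c' * 2^(m-1) + 2^(m-1) := by ring
        omega] at hlucas
      exact hlucas
    -- γ has odd value
    haveI : NeZero (2^(h+1)) := ⟨by positivity⟩
    have hval : ((γ.val : ℕ) : ZMod (2^(h+1))) = γ := by
      rw [ZMod.natCast_val, ZMod.cast_id]
    have hγ2 : ((γ.val : ℕ) : ZMod 2) = (((s - 1 + t).choose t : ℕ) : ZMod 2) := by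
      rw [← hγ]
      conv_rhs => rw [← hval]
      rw [map_natCast]
    have hγodd : γ.val % 2 = 1 := by
      have := (ZMod.natCast_eq_natCast_iff _ _ _).mp hγ2
      unfold Nat.ModEq at this
      omega
    -- back to ℕ
    rw [← hval, ← Nat.cast_mul] at hst
    have hmodeq := (ZMod.natCast_eq_natCast_iff _ _ _).mp hst
    unfold Nat.ModEq at hmodeq
    obtain ⟨q, hq⟩ : ∃ q, γ.val = 2*q+1 := ⟨γ.val/2, by omega⟩
    have hlin : 2^h * γ.val = 2^(h+1) * q + 2^h := by rw [hq, pow_succ]; ring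
    have hmod2 : (2^h * γ.val) % 2^(h+1) = 2^h := by
      rw [hlin, Nat.mul_add_mod, Nat.mod_eq_of_lt (by omega)]
    set S := stirling2 N K with hS
    have hdm := Nat.div_add_mod S (2^(h+1))
    set q2 := S / 2^(h+1) with hq2
    have h5 : 2^h * (2*q2+1) = 2^(h+1) * q2 + 2^h := by rw [pow_succ]; ring
    have hSdec : S = 2^h * (2*q2+1) := by omega
    rw [hSdec, padicValNat.mul (by positivity) (by omega), padicValNat.prime_pow,
      padicValNat.eq_zero_of_not_dvd (by omega), add_zero]
  constructor
  · rw [hmain, hsig]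
    push_cast
    ring
  · rw [hsig]
    push_cast
    ring
end

section
/- Let h, u, c be natural numbers with c ≥ 1 and 0 < u < 2^h. Then ν(S(c·2^h + u, 2^h)) ≥ h - 1 - ν(u). -/
open PowerSeries Finset

lemma stirling2_succ_succ (n k : ℕ) :
    stirling2 (n+1) (k+1) = (k+1) * stirling2 n (k+1) + stirling2 n k := rfl

lemma stirling2_eq_zero_of_lt : ∀ n k : ℕ, n < k → stirling2 n k = 0 := by
  intro n
  induction n with
  | zero => intro k hk; match k, hk with
            | k+1, _ => rfl
  | succ n ih =>
    intro k hk
    match k, hk with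
    | k+1, hk =>
      rw [stirling2_succ_succ, ih (k+1) (by omega), ih k (by omega)]; ring

lemma stirling2_diag_pos : ∀ n : ℕ, 0 < stirling2 n n := by
  intro n
  induction n with
  | zero => exact Nat.one_pos
  | succ n ih => rw [stirling2_succ_succ]; omega

lemma stirling2_pos : ∀ n k : ℕ, 1 ≤ k → k ≤ n → 0 < stirling2 n k := by
  intro n
  induction n with
  | zero => intro k h1 h2; omega
  | succ n ih =>
    intro k h1 h2
    match k, h1 with
    | k+1, _ =>
      rcases Nat.lt_or_ge (k+1) (n+1) with hlt | hge
      · rw [stirling2_succ_succ]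
        have := ih (k+1) (by omega) (by omega)
        positivity
      · have : k + 1 = n + 1 := by omega
        rw [this]; exact stirling2_diag_pos (n+1)

/-- Generating function of Stirling numbers of the second kind for fixed `k`. -/
noncomputable def SA (k : ℕ) : PowerSeries ℤ := PowerSeries.mk fun n => (stirling2 n k : ℤ)

/-- The polynomial `∏_{i=1}^{k} (1 - i X)` as a power series. -/
noncomputable def SQ (k : ℕ) : PowerSeries ℤ :=
  ∏ i ∈ Finset.range k, (1 - PowerSeries.C ((i : ℤ) + 1) * PowerSeries.X)

lemma SA_rec (k : ℕ) :
    SA (k+1) = X * SA k + C ((k : ℤ)+1) * (X * SA (k+1)) := by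
  ext n
  cases n with
  | zero =>
    simp [SA, stirling2]
  | succ n =>
    have hr : (coeff (n+1)) (X * SA k + C ((k : ℤ)+1) * (X * SA (k+1)))
        = (stirling2 n k : ℤ) + ((k : ℤ)+1) * (stirling2 n (k+1)) := by
      rw [map_add, coeff_succ_X_mul, coeff_C_mul, coeff_succ_X_mul]
      simp [SA]
    rw [hr]
    simp only [SA, coeff_mk, stirling2_succ_succ]
    push_cast
    ring

lemma SQ_mul_SA (k : ℕ) : SQ k * SA k = X ^ k := by
  induction k with
  | zero =>
    have h1 : SQ 0 = 1 := by simp [SQ]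
    have h2 : SA 0 = 1 := by
      ext n
      cases n with
      | zero => simp [SA, stirling2]
      | succ n => simp [SA, stirling2]
    rw [h1, h2]; simp
  | succ k ih =>
    have key : (1 - C ((k : ℤ)+1) * X) * SA (k+1) = X * SA k := by
      have h := SA_rec k
      linear_combination h
    have hq : SQ (k+1) = SQ k * (1 - C ((k : ℤ)+1) * X) := by
      rw [SQ, Finset.prod_range_succ]; rfl
    rw [hq, mul_assoc, key, pow_succ]
    calc SQ k * (X * SA k) = X * (SQ k * SA k) := by ring
    _ = X * X ^ k := by rw [ih]
    _ = X ^ k * X := by ring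

/-- Weight: the required 2-adic valuation at coefficient `d`. -/
def wt (h d : ℕ) : ℕ := if d = 0 then 0 else h - 1 - padicValNat 2 d

lemma nu_min_le {i j : ℕ} (hi : i ≠ 0) (hj : j ≠ 0) :
    min (padicValNat 2 i) (padicValNat 2 j) ≤ padicValNat 2 (i + j) := by
  have h1 : (2:ℕ) ^ min (padicValNat 2 i) (padicValNat 2 j) ∣ i + j :=
    dvd_add ((pow_dvd_pow 2 (min_le_left _ _)).trans pow_padicValNat_dvd)
      ((pow_dvd_pow 2 (min_le_right _ _)).trans pow_padicValNat_dvd)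
  exact (padicValNat_dvd_iff_le (by omega)).mp h1

lemma wt_add_le (h i j : ℕ) : wt h (i + j) ≤ wt h i + wt h j := by
  rcases eq_or_ne i 0 with rfl | hi
  · simp [wt]
  rcases eq_or_ne j 0 with rfl | hj
  · simp [wt]
  have hm := nu_min_le hi hj
  unfold wt
  simp only [if_neg hi, if_neg hj, if_neg (by omega : i + j ≠ 0)]
  omega

lemma wt_pair_le (h i j : ℕ) : wt (h+1) (i + j) ≤ 1 + wt h i + wt h j := by
  rcases eq_or_ne i 0 with rfl | hi
  · simp only [zero_add, wt]; split_ifs <;> omega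
  rcases eq_or_ne j 0 with rfl | hj
  · simp only [add_zero, wt]; split_ifs <;> omega
  have hm := nu_min_le hi hj
  unfold wt
  simp only [if_neg hi, if_neg hj, if_neg (by omega : i + j ≠ 0)]
  omega

lemma wt_mid_le (h i : ℕ) : wt (h+1) (i + i) ≤ 2 * wt h i := by
  rcases eq_or_ne i 0 with rfl | hi
  · simp [wt]
  have h2 : padicValNat 2 (i + i) = padicValNat 2 2 + padicValNat 2 i := by
    have he : i + i = 2 * i := by ring
    rw [he, padicValNat.mul (by norm_num) hi]
  have h3 : padicValNat 2 2 = 1 := padicValNat.self (by norm_num)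
  unfold wt
  simp only [if_neg hi, if_neg (by omega : i + i ≠ 0)]
  omega

lemma wt_le_h (h d : ℕ) : wt (h+1) d ≤ h := by unfold wt; split <;> omega

/-- The shifted product `∏_{i=2^h+1}^{2^{h+1}} (1 - i X)`. -/
noncomputable def Qs (h : ℕ) : PowerSeries ℤ :=
  ∏ i ∈ Finset.range (2^h), (1 - C (((2^h + i : ℕ) : ℤ) + 1) * X)

lemma SQ_split (h : ℕ) : SQ (2^(h+1)) = SQ (2^h) * Qs h := by
  rw [SQ, show 2^(h+1) = 2^h + 2^h by ring, Finset.prod_range_add]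
  rfl

lemma Qs_sub_dvd (h d : ℕ) :
    (2:ℤ)^h ∣ (coeff d) (Qs h - SQ (2^h)) := by
  haveI : NeZero (2^h : ℕ) := ⟨pow_ne_zero _ two_ne_zero⟩
  set f := Int.castRingHom (ZMod (2^h)) with hf
  have hmap : PowerSeries.map f (Qs h) = PowerSeries.map f (SQ (2^h)) := by
    rw [Qs, SQ, map_prod, map_prod]
    apply Finset.prod_congr rfl
    intro i _
    simp only [map_sub, map_mul, map_one, PowerSeries.map_C, PowerSeries.map_X]
    congr 2
    apply congrArg
    have h0 : ((2^h : ℕ) : ZMod (2^h)) = 0 := ZMod.natCast_self _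
    simp only [hf, Int.coe_castRingHom]
    push_cast
    push_cast at h0
    rw [h0]
    ring
  have hz : ((((coeff d) (Qs h - SQ (2^h))) : ℤ) : ZMod (2^h)) = 0 := by
    rw [map_sub]
    have h1 : (((coeff d) (Qs h) : ℤ) : ZMod (2^h)) = (coeff d) (PowerSeries.map f (Qs h)) := by
      rw [PowerSeries.coeff_map]; rfl
    have h2 : (((coeff d) (SQ (2^h)) : ℤ) : ZMod (2^h)) = (coeff d) (PowerSeries.map f (SQ (2^h))) := by
      rw [PowerSeries.coeff_map]; rfl
    push_cast
    rw [h1, h2, hmap]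
    ring
  have := (ZMod.intCast_zmod_eq_zero_iff_dvd _ _).mp hz
  have hcast : ((2^h : ℕ) : ℤ) = (2:ℤ)^h := by push_cast; ring
  rwa [hcast] at this

lemma SQ_coeff_dvd : ∀ h d : ℕ, (2:ℤ)^(wt h d) ∣ (coeff d) (SQ (2^h)) := by
  intro h
  induction h with
  | zero =>
    intro d
    have hw : wt 0 d = 0 := by unfold wt; split <;> omega
    rw [hw, pow_zero]
    exact one_dvd _
  | succ h ih =>
    intro d
    rcases eq_or_ne d 0 with rfl | hd
    · simp only [wt, if_pos rfl, pow_zero]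
      exact one_dvd _
    have hdecomp : (coeff d) (SQ (2^(h+1)))
        = (coeff d) (SQ (2^h) * SQ (2^h)) + (coeff d) (SQ (2^h) * (Qs h - SQ (2^h))) := by
      rw [← map_add]
      congr 1
      rw [SQ_split h]
      ring
    rw [hdecomp]
    apply dvd_add
    · -- square part
      rw [coeff_mul, Finset.Nat.sum_antidiagonal_eq_sum_range_succ_mk]
      set q : ℕ → ℤ := fun i => (coeff i) (SQ (2^h)) with hq
      show (2:ℤ)^(wt (h+1) d) ∣ ∑ i ∈ range (d+1), q i * q (d - i)
      have hsplit1 := Finset.sum_filter_add_sum_filter_not (range (d+1))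
        (fun i => 2*i < d) (fun i => q i * q (d - i))
      have hsplit2 := Finset.sum_filter_add_sum_filter_not
        ((range (d+1)).filter (fun i => ¬ 2*i < d))
        (fun i => 2*i = d) (fun i => q i * q (d - i))
      rw [Finset.filter_filter, Finset.filter_filter] at hsplit2
      have hmideq : (range (d+1)).filter (fun i => ¬ 2*i < d ∧ 2*i = d)
          = (range (d+1)).filter (fun i => 2*i = d) := by
        apply Finset.filter_congr
        intro x _
        constructor
        · exact fun hx => hx.2
        · intro hx; exact ⟨by omega, hx⟩
      have hgteq : (range (d+1)).filter (fun i => ¬ 2*i < d ∧ ¬ 2*i = d)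
          = (range (d+1)).filter (fun i => d < 2*i) := by
        apply Finset.filter_congr
        intro x _
        constructor
        · intro hx; omega
        · intro hx; omega
      rw [hmideq, hgteq] at hsplit2
      have hbij : ∑ i ∈ (range (d+1)).filter (fun i => d < 2*i), q i * q (d - i)
          = ∑ i ∈ (range (d+1)).filter (fun i => 2*i < d), q i * q (d - i) := by
        apply Finset.sum_nbij' (fun i => d - i) (fun i => d - i)
        · intro a ha
          simp only [Finset.mem_filter, Finset.mem_range] at ha ⊢
          omega
        · intro a ha
          simp only [Finset.mem_filter, Finset.mem_range] at ha ⊢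
          omega
        · intro a ha
          simp only [Finset.mem_filter, Finset.mem_range] at ha
          omega
        · intro a ha
          simp only [Finset.mem_filter, Finset.mem_range] at ha
          omega
        · intro a ha
          simp only [Finset.mem_filter, Finset.mem_range] at ha
          have : d - (d - a) = a := by omega
          rw [this]
          ring
      have htotal : ∑ i ∈ range (d+1), q i * q (d - i)
          = 2 * (∑ i ∈ (range (d+1)).filter (fun i => 2*i < d), q i * q (d - i))
            + ∑ i ∈ (range (d+1)).filter (fun i => 2*i = d), q i * q (d - i) := by
        rw [← hsplit1, ← hsplit2, hbij]
        ring
      rw [htotal]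
      apply dvd_add
      · rw [Finset.mul_sum]
        apply Finset.dvd_sum
        intro i hi
        simp only [Finset.mem_filter, Finset.mem_range] at hi
        have hle : wt (h+1) d ≤ 1 + wt h i + wt h (d - i) := by
          have e : i + (d - i) = d := by omega
          calc wt (h+1) d = wt (h+1) (i + (d-i)) := by rw [e]
          _ ≤ 1 + wt h i + wt h (d-i) := wt_pair_le h i (d-i)
        refine (pow_dvd_pow 2 hle).trans ?_
        have e2 : 2 * (q i * q (d - i)) = (2^1 * q i) * q (d - i) := by ring
        rw [e2, pow_add, pow_add]
        exact mul_dvd_mul (mul_dvd_mul dvd_rfl (ih i)) (ih (d-i))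
      · apply Finset.dvd_sum
        intro i hi
        simp only [Finset.mem_filter, Finset.mem_range] at hi
        have hle : wt (h+1) d ≤ 2 * wt h i := by
          have e : i + i = d := by omega
          calc wt (h+1) d = wt (h+1) (i + i) := by rw [e]
          _ ≤ 2 * wt h i := wt_mid_le h i
        refine (pow_dvd_pow 2 hle).trans ?_
        have e2 : d - i = i := by omega
        rw [e2, two_mul, pow_add]
        exact mul_dvd_mul (ih i) (ih i)
    · -- 2^h part
      refine (pow_dvd_pow 2 (wt_le_h h d)).trans ?_
      rw [coeff_mul]
      apply Finset.dvd_sum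
      intro p _
      exact Dvd.dvd.mul_left (Qs_sub_dvd h p.2) _

lemma SQ_coeff_zero (k : ℕ) : (coeff 0) (SQ k) = 1 := by
  rw [PowerSeries.coeff_zero_eq_constantCoeff, SQ, map_prod]
  apply Finset.prod_eq_one
  intro i _
  simp

lemma stirling_coeff_dvd (h : ℕ) : ∀ n : ℕ, (2:ℤ)^(wt h (n - 2^h)) ∣ (stirling2 n (2^h) : ℤ) := by
  intro n
  induction n using Nat.strong_induction_on with
  | _ n ih =>
    rcases Nat.lt_or_ge (2^h) n with hgt | hle
    swap
    · have : n - 2^h = 0 := by omega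
      rw [this]
      simp only [wt, if_pos rfl, pow_zero]
      exact one_dvd _
    have hco := congrArg (coeff n) (SQ_mul_SA (2^h))
    rw [coeff_mul, Finset.Nat.sum_antidiagonal_eq_sum_range_succ_mk,
        PowerSeries.coeff_X_pow, if_neg (by omega : ¬ n = 2^h),
        Finset.sum_range_succ'] at hco
    simp only [Nat.sub_zero, SQ_coeff_zero, one_mul] at hco
    have hSAn : (coeff n) (SA (2^h)) = (stirling2 n (2^h) : ℤ) := by
      simp [SA]
    rw [hSAn] at hco
    have key : (stirling2 n (2^h) : ℤ)
        = -∑ i ∈ range n, (coeff (i+1)) (SQ (2^h)) * (coeff (n - (i+1))) (SA (2^h)) := by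
      linear_combination hco
    rw [key, dvd_neg]
    apply Finset.dvd_sum
    intro i hi
    simp only [Finset.mem_range] at hi
    have hSAj : (coeff (n - (i+1))) (SA (2^h)) = (stirling2 (n - (i+1)) (2^h) : ℤ) := by
      simp [SA]
    rw [hSAj]
    rcases Nat.lt_or_ge (n - (i+1)) (2^h) with hjlt | hjge
    · rw [stirling2_eq_zero_of_lt _ _ hjlt]
      simp
    · have hle2 : wt h (n - 2^h) ≤ wt h (i+1) + wt h ((n - (i+1)) - 2^h) := by
        have e : (i+1) + ((n - (i+1)) - 2^h) = n - 2^h := by omega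
        calc wt h (n - 2^h) = wt h ((i+1) + ((n - (i+1)) - 2^h)) := by rw [e]
        _ ≤ _ := wt_add_le h (i+1) ((n - (i+1)) - 2^h)
      refine (pow_dvd_pow 2 hle2).trans ?_
      rw [pow_add]
      exact mul_dvd_mul (SQ_coeff_dvd h (i+1)) (ih (n - (i+1)) (by omega))

theorem stmt_14 (h u c : ℕ) (hc : 1 ≤ c) (hu : 0 < u) (hu2 : u < 2 ^ h) :
    (padicValNat 2 (stirling2 (c * 2 ^ h + u) (2 ^ h)) : ℤ) ≥ (h : ℤ) - 1 - padicValNat 2 u := by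
  set n := c * 2^h + u with hn
  set a := padicValNat 2 u with ha
  have hK : 0 < 2^h := Nat.pow_pos (n := h) (by norm_num)
  have hu0 : u ≠ 0 := by omega
  have h2a : 2^a ∣ u := pow_padicValNat_dvd
  have h2a1 : ¬ 2^(a+1) ∣ u := pow_succ_padicValNat_not_dvd hu0
  have hah : a < h := by
    have h1 : 2^a ≤ u := Nat.le_of_dvd (by omega) h2a
    exact (Nat.pow_lt_pow_iff_right (by norm_num)).mp (lt_of_le_of_lt h1 hu2)
  have hcK : 2^h ≤ c * 2^h := Nat.le_mul_of_pos_left _ (by omega)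
  have hnK : n - 2^h = (c-1) * 2^h + u := by
    rw [hn, Nat.sub_one_mul]
    omega
  have hne : n - 2^h ≠ 0 := by omega
  have hnu : padicValNat 2 (n - 2^h) = a := by
    have hd1 : 2^a ∣ n - 2^h := by
      rw [hnK]
      exact dvd_add (Dvd.dvd.mul_left (pow_dvd_pow 2 (by omega)) _) h2a
    have hd2 : ¬ 2^(a+1) ∣ n - 2^h := by
      rw [hnK]
      intro hdd
      apply h2a1
      have hdvd : 2^(a+1) ∣ (c-1) * 2^h := Dvd.dvd.mul_left (pow_dvd_pow 2 (by omega)) _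
      have he : u = ((c-1) * 2^h + u) - (c-1) * 2^h := by omega
      rw [he]
      exact Nat.dvd_sub hdd hdvd
    have hge := (padicValNat_dvd_iff_le hne).mp hd1
    have hlt : ¬ (a+1 ≤ padicValNat 2 (n - 2^h)) :=
      fun hcon => hd2 ((padicValNat_dvd_iff_le hne).mpr hcon)
    omega
  have hwt : wt h (n - 2^h) = h - 1 - a := by
    unfold wt
    rw [if_neg hne, hnu]
  have hdvd := stirling_coeff_dvd h n
  rw [hwt] at hdvd
  have hdnat : (2:ℕ)^(h-1-a) ∣ stirling2 n (2^h) := by exact_mod_cast hdvd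
  have hpos : 0 < stirling2 n (2^h) := stirling2_pos n (2^h) (by omega) (by omega)
  have hv : h - 1 - a ≤ padicValNat 2 (stirling2 n (2^h)) :=
    (padicValNat_dvd_iff_le (by omega)).mp hdnat
  omega
end

section
/- Let u = (u_1, u_2, u_3, ...) be a finitely supported sequence of natural numbers, w = Σ i·u_i, d = Σ u_i, and ν(u) = Σ u_i·ν(i+1), where ν is the 2-adic valuation. If w ≤ n then n - ν(u) ≥ n - w + (w - d)/2; moreover n - ν(u) = (w - d)/2 if and only if n = w and u_i = 0 for all i except possibly i = 1 and i = 3. -/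
lemma two_mul_le_two_pow (ν : ℕ) : 2 * ν ≤ 2 ^ ν := by
  induction ν with
  | zero => simp
  | succ k ih =>
    rcases Nat.eq_zero_or_pos k with h | h
    · subst h; norm_num
    · have : 2 ≤ 2 ^ k := Nat.one_lt_two_pow_iff.mpr (by omega)
      calc 2 * (k+1) = 2*k + 2 := by ring
        _ ≤ 2^k + 2^k := by omega
        _ = 2^(k+1) := by ring

lemma two_mul_lt_two_pow (ν : ℕ) (h : 3 ≤ ν) : 2 * ν < 2 ^ ν := by
  induction ν with
  | zero => omega
  | succ k ih =>
    rcases Nat.lt_or_ge k 3 with hk | hk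
    · interval_cases k <;> simp_all
    · have h1 := ih (by omega)
      have h2 : 2 ≤ 2 ^ k := Nat.one_lt_two_pow_iff.mpr (by omega)
      have h3 : 2^(k+1) = 2^k + 2^k := by ring
      omega

lemma key_s19 (i : ℕ) (hi : 1 ≤ i) : 2 * padicValNat 2 (i + 1) ≤ i + 1 := by
  have h1 : 2 ^ padicValNat 2 (i+1) ∣ i + 1 := pow_padicValNat_dvd
  have h2 := Nat.le_of_dvd (by omega) h1
  have := two_mul_le_two_pow (padicValNat 2 (i+1))
  omega

lemma key_eq (i : ℕ) (hi : 1 ≤ i) (h : 2 * padicValNat 2 (i + 1) = i + 1) :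
    i = 1 ∨ i = 3 := by
  set ν := padicValNat 2 (i+1) with hν
  have h1 : 2 ^ ν ∣ i + 1 := pow_padicValNat_dvd
  have h2 := Nat.le_of_dvd (by omega) h1
  have h3 := two_mul_le_two_pow ν
  have hν2 : ν ≤ 2 := by
    by_contra hc
    have := two_mul_lt_two_pow ν (by omega)
    omega
  interval_cases ν <;> omega

lemma val4 : padicValNat 2 4 = 2 := by
  rw [show (4:ℕ) = 2^2 by norm_num, padicValNat.prime_pow]

theorem stmt_19 (u : ℕ →₀ ℕ) (hu0 : u 0 = 0) (n : ℕ)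
    (w d νu : ℕ)
    (hw : w = u.sum fun i c => i * c) (hd : d = u.sum fun _ c => c)
    (hν : νu = u.sum fun i c => c * padicValNat 2 (i + 1))
    (hwn : w ≤ n) :
    ((n : ℚ) - νu ≥ (n : ℚ) - w + ((w : ℚ) - d) / 2) ∧
      ((n : ℚ) - νu = ((w : ℚ) - d) / 2 ↔
        n = w ∧ ∀ i, i ≠ 1 → i ≠ 3 → u i = 0) := by
  classical
  have hpos : ∀ i ∈ u.support, 1 ≤ i := by
    intro i hi
    rcases Nat.eq_zero_or_pos i with h | h
    · subst h; simp [Finsupp.mem_support_iff, hu0] at hi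
    · exact h
  rw [Finsupp.sum] at hw hd hν
  have h2ν : 2 * νu = ∑ i ∈ u.support, u i * (2 * padicValNat 2 (i + 1)) := by
    rw [hν, Finset.mul_sum]; exact Finset.sum_congr rfl fun i _ => by ring
  have hwd : w + d = ∑ i ∈ u.support, u i * (i + 1) := by
    rw [hw, hd, ← Finset.sum_add_distrib]
    exact Finset.sum_congr rfl fun i _ => by ring
  have hle : ∀ i ∈ u.support, u i * (2 * padicValNat 2 (i + 1)) ≤ u i * (i + 1) :=
    fun i hi => Nat.mul_le_mul_left _ (key_s19 i (hpos i hi))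
  have hmain : 2 * νu ≤ w + d := by
    rw [h2ν, hwd]; exact Finset.sum_le_sum hle
  constructor
  · have : (2 * νu : ℚ) ≤ (w : ℚ) + d := by exact_mod_cast hmain
    linarith
  · have hcast : ((n : ℚ) - νu = ((w : ℚ) - d) / 2) ↔ 2 * n + d = 2 * νu + w := by
    -- 2n - 2νu = w - d  ⟺ 2n + d = 2νu + w
      rw [eq_div_iff (by norm_num : (2:ℚ) ≠ 0)]
      constructor
      · intro h
        have : (2 * n + d : ℚ) = 2 * νu + w := by linarith
        exact_mod_cast this
      · intro h
        have : (2 * n + d : ℚ) = 2 * νu + w := by exact_mod_cast h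
        linarith
    rw [hcast]
    constructor
    · intro h
      have hnw : n = w := by omega
      have heq : ∑ i ∈ u.support, u i * (i + 1)
          = ∑ i ∈ u.support, u i * (2 * padicValNat 2 (i + 1)) := by omega
      have hterm := (Finset.sum_eq_sum_iff_of_le hle).mp heq.symm
      refine ⟨hnw, fun i h1 h3 => ?_⟩
      by_contra hne
      have hi : i ∈ u.support := Finsupp.mem_support_iff.mpr hne
      have := hterm i hi
      have h2 : 2 * padicValNat 2 (i + 1) = i + 1 := by
        have := Nat.eq_of_mul_eq_mul_left (Nat.pos_of_ne_zero hne) this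
        omega
      rcases key_eq i (hpos i hi) h2 with h | h <;> omega
    · rintro ⟨hnw, hz⟩
      have heq : ∑ i ∈ u.support, u i * (2 * padicValNat 2 (i + 1))
          = ∑ i ∈ u.support, u i * (i + 1) := by
        refine Finset.sum_congr rfl fun i hi => ?_
        have : i = 1 ∨ i = 3 := by
          by_contra hc
          push_neg at hc
          exact Finsupp.mem_support_iff.mp hi (hz i hc.1 hc.2)
        rcases this with h | h <;> subst h
        · norm_num
        · rw [show (3:ℕ) + 1 = 4 from rfl, val4]
      omega
end
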